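/- Every C² solution Ω on an interval of Ω'' - (σ'/σ)Ω' - (2/3)(Ω')² = 0 with the additional assumption that c₁∫σ dt + c₂ > 0 satisfies e^{Ω(t)} = [c₁∫σ(t)dt + c₂]^{-3/2} for suitable constants c₁, c₂; conversely, for any constants c₁, c₂ such that S(t) = c₁∫σ dt + c₂ > 0 on the interval, the function Ω(t) = -(3/2)·log S(t) solves Ω'' - (σ'/σ)Ω' - (2/3)(Ω')² = 0. -/

import Mathlib

open Set Real

private lemma const_of_derivAt_zero {lo hi : ℝ} {g : ℝ → ℝ}
    (h : ∀ t ∈ Set.Ioo lo hi, HasDerivAt g 0 t) {x y : ℝ}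
    (hx : x ∈ Set.Ioo lo hi) (hy : y ∈ Set.Ioo lo hi) : g x = g y := by
  apply (convex_Ioo lo hi).is_const_of_fderivWithin_eq_zero
    (fun t ht => ((h t ht).differentiableAt).differentiableWithinAt)
    (fun t ht => ?_) hx hy
  rw [fderivWithin_of_isOpen isOpen_Ioo ht, (h t ht).hasFDerivAt.fderiv]
  ext; simp

/-- Solutions of `Ω'' - (σ'/σ) Ω' - (2/3)(Ω')² = 0`: every `C²` solution satisfies
`e^{Ω} = (c₁ ∫σ + c₂)^{-3/2}` for suitable constants `c₁, c₂` (with `c₁ ∫σ + c₂ > 0`),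
and conversely `Ω = -(3/2) log(c₁ ∫σ + c₂)` solves the ODE whenever `c₁ ∫σ + c₂ > 0`. -/
theorem omega_ode_solutions (lo hi : ℝ) (hlo : lo < hi)
    (σ F : ℝ → ℝ)
    (hσ : ContDiffOn ℝ 1 σ (Set.Ioo lo hi))
    (hσ0 : ∀ t ∈ Set.Ioo lo hi, σ t ≠ 0)
    (hF : ∀ t ∈ Set.Ioo lo hi, HasDerivAt F (σ t) t) :
    (∀ Ω : ℝ → ℝ, ContDiffOn ℝ 2 Ω (Set.Ioo lo hi) →
      (∀ t ∈ Set.Ioo lo hi,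
        deriv (deriv Ω) t - (deriv σ t / σ t) * deriv Ω t
          - (2 / 3) * (deriv Ω t) ^ 2 = 0) →
      ∃ c₁ c₂ : ℝ, (∀ t ∈ Set.Ioo lo hi, 0 < c₁ * F t + c₂) ∧
        ∀ t ∈ Set.Ioo lo hi,
          Real.exp (Ω t) = (c₁ * F t + c₂) ^ (-(3 : ℝ) / 2))
    ∧ (∀ c₁ c₂ : ℝ, (∀ t ∈ Set.Ioo lo hi, 0 < c₁ * F t + c₂) →
      ∀ t ∈ Set.Ioo lo hi,
        deriv (deriv (fun s => -(3 / 2) * Real.log (c₁ * F s + c₂))) t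
          - (deriv σ t / σ t)
            * deriv (fun s => -(3 / 2) * Real.log (c₁ * F s + c₂)) t
          - (2 / 3)
            * (deriv (fun s => -(3 / 2) * Real.log (c₁ * F s + c₂)) t) ^ 2 = 0) := by
  have hopen : IsOpen (Set.Ioo lo hi) := isOpen_Ioo
  -- σ has a derivative at each point
  have hσd : ∀ t ∈ Set.Ioo lo hi, HasDerivAt σ (deriv σ t) t := fun t ht =>
    (((hσ.differentiableOn one_ne_zero) t ht).differentiableAt
      (hopen.mem_nhds ht)).hasDerivAt
  constructor
  · -- forward direction
    intro Ω hΩ hODE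
    -- Ω has derivatives
    have hΩd : ∀ t ∈ Set.Ioo lo hi, HasDerivAt Ω (deriv Ω t) t := fun t ht =>
      (((hΩ.differentiableOn (by norm_num)) t ht).differentiableAt
        (hopen.mem_nhds ht)).hasDerivAt
    have hΩ' : ContDiffOn ℝ 1 (deriv Ω) (Set.Ioo lo hi) :=
      hΩ.deriv_of_isOpen hopen (by norm_num)
    have hΩdd : ∀ t ∈ Set.Ioo lo hi, HasDerivAt (deriv Ω) (deriv (deriv Ω) t) t :=
      fun t ht => (((hΩ'.differentiableOn one_ne_zero) t ht).differentiableAt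
        (hopen.mem_nhds ht)).hasDerivAt
    set W : ℝ → ℝ := fun s => Real.exp (-(2 / 3) * Ω s) with hW
    set w1 : ℝ → ℝ := fun s => -(2 / 3) * deriv Ω s * W s with hw1
    have hWd : ∀ t ∈ Set.Ioo lo hi, HasDerivAt W (w1 t) t := by
      intro t ht
      have := (((hΩd t ht).const_mul (-(2 / 3))).exp)
      simpa [hw1, hW, mul_comm] using this
    have hw1d : ∀ t ∈ Set.Ioo lo hi,
        HasDerivAt w1 (deriv σ t / σ t * w1 t) t := by
      intro t ht
      have h1 : HasDerivAt w1
          (-(2 / 3) * deriv (deriv Ω) t * W t + (-(2 / 3) * deriv Ω t) * w1 t) t := by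
        have := (((hΩdd t ht).const_mul (-(2 / 3))).mul (hWd t ht))
        simpa [hw1, mul_assoc, Pi.mul_def] using this
      convert h1 using 1
      have hode := hODE t ht
      have : deriv (deriv Ω) t =
          deriv σ t / σ t * deriv Ω t + 2 / 3 * (deriv Ω t) ^ 2 := by linarith
      rw [this, hw1]; ring
    -- g = w1 / σ is constant
    set g : ℝ → ℝ := fun s => w1 s / σ s with hg
    have hgd : ∀ t ∈ Set.Ioo lo hi, HasDerivAt g 0 t := by
      intro t ht
      have := (hw1d t ht).div (hσd t ht) (hσ0 t ht)
      have h2 := hσ0 t ht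
      have h0 : (deriv σ t / σ t * w1 t * σ t - w1 t * deriv σ t) / σ t ^ 2 = 0 := by
        field_simp
        ring
      rw [hg]; rw [h0] at this; exact this
    obtain ⟨t₀, ht₀⟩ : ∃ t₀, t₀ ∈ Set.Ioo lo hi := ⟨(lo + hi) / 2, by constructor <;> linarith⟩
    set c₁ := g t₀ with hc₁
    have hw1σ : ∀ t ∈ Set.Ioo lo hi, w1 t = c₁ * σ t := by
      intro t ht
      have h : w1 t / σ t = c₁ := const_of_derivAt_zero hgd ht ht₀
      exact (div_eq_iff (hσ0 t ht)).1 h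
    set c₂ := W t₀ - c₁ * F t₀ with hc₂
    have hWS : ∀ t ∈ Set.Ioo lo hi, W t = c₁ * F t + c₂ := by
      intro t ht
      have hhd : ∀ s ∈ Set.Ioo lo hi, HasDerivAt (fun u => W u - c₁ * F u) 0 s := by
        intro s hs
        have := (hWd s hs).sub ((hF s hs).const_mul c₁)
        rw [hw1σ s hs] at this
        simpa [Pi.sub_def] using this
      have := const_of_derivAt_zero hhd ht ht₀
      rw [hc₂]; linarith
    refine ⟨c₁, c₂, fun t ht => ?_, fun t ht => ?_⟩
    · rw [← hWS t ht]; exact Real.exp_pos _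
    · rw [← hWS t ht, hW]
      rw [Real.rpow_def_of_pos (Real.exp_pos _), Real.log_exp]
      ring_nf
  · -- converse direction
    intro c₁ c₂ hS t ht
    set S : ℝ → ℝ := fun s => c₁ * F s + c₂ with hSdef
    have hSd : ∀ s ∈ Set.Ioo lo hi, HasDerivAt S (c₁ * σ s) s := fun s hs => by
      simpa [hSdef] using ((hF s hs).const_mul c₁).add_const c₂
    set Ω : ℝ → ℝ := fun s => -(3 / 2) * Real.log (S s) with hΩdef
    have hΩd : ∀ s ∈ Set.Ioo lo hi,
        HasDerivAt Ω (-(3 / 2) * (c₁ * σ s / S s)) s := fun s hs =>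
      ((hSd s hs).log (ne_of_gt (hS s hs))).const_mul _
    have hderiv : Set.EqOn (deriv Ω) (fun s => -(3 / 2) * (c₁ * σ s / S s))
        (Set.Ioo lo hi) := fun s hs => (hΩd s hs).deriv
    have hD2 : HasDerivAt (fun s => -(3 / 2) * (c₁ * σ s / S s))
        (-(3 / 2) * ((c₁ * deriv σ t * S t - c₁ * σ t * (c₁ * σ t)) / S t ^ 2)) t := by
      exact (((hσd t ht).const_mul c₁).div (hSd t ht) (ne_of_gt (hS t ht))).const_mul _
    have hdd : deriv (deriv Ω) t =
        -(3 / 2) * ((c₁ * deriv σ t * S t - c₁ * σ t * (c₁ * σ t)) / S t ^ 2) := by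
      rw [Filter.EventuallyEq.deriv_eq
        (Filter.eventuallyEq_of_mem (hopen.mem_nhds ht) hderiv)]
      exact hD2.deriv
    rw [hdd, hderiv ht]
    have h1 : S t ≠ 0 := ne_of_gt (hS t ht)
    have h2 : σ t ≠ 0 := hσ0 t ht
    field_simp
    ring
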